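/- Let X be a real random vector in ℝ^k with ‖X‖ ≤ D almost surely and E[X] = 0, and let γ > 0. Then for all s ∈ ℝ^k with ‖s‖ ≤ 1/(γD), E[exp(2⟨s,X⟩)] ≤ 1 + ‖s‖²D²γ²(e^{2/γ} - 1 - 2/γ). -/

import Mathlib

open MeasureTheory

lemma exp_series_tail (x : ℝ) :
    Real.exp x - 1 - x = ∑' n : ℕ, x ^ (n + 2) / (n + 2).factorial := by
  have hs : Summable (fun n : ℕ => x ^ n / n.factorial) := Real.summable_pow_div_factorial x
  have h := Summable.sum_add_tsum_nat_add 2 hs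
  have hexp : Real.exp x = ∑' n : ℕ, x ^ n / n.factorial := by
    rw [Real.exp_eq_exp_ℝ, NormedSpace.exp_eq_tsum_div]
  rw [hexp, ← h]
  simp [Finset.sum_range_succ]
  ring

lemma exp_pointwise_bound (u m : ℝ) (hm : 0 < m) (hu : |u| ≤ m) :
    Real.exp u - 1 - u ≤ u ^ 2 / m ^ 2 * (Real.exp m - 1 - m) := by
  rw [exp_series_tail u, exp_series_tail m]
  have hsu : Summable (fun n : ℕ => u ^ (n + 2) / (n + 2).factorial) :=
    (Real.summable_pow_div_factorial u).comp_injective (add_left_injective 2)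
  have hsm : Summable (fun n : ℕ => m ^ (n + 2) / (n + 2).factorial) :=
    (Real.summable_pow_div_factorial m).comp_injective (add_left_injective 2)
  rw [← tsum_mul_left]
  refine Summable.tsum_le_tsum (fun n => ?_) hsu (hsm.mul_left _)
  have hfac : (0:ℝ) < (n + 2).factorial := by positivity
  rw [div_le_iff₀ hfac] at *
  have key : u ^ (n + 2) ≤ u ^ 2 * m ^ n := by
    calc u ^ (n + 2) ≤ |u ^ (n + 2)| := le_abs_self _
    _ = |u| ^ n * |u| ^ 2 := by rw [abs_pow]; ring
    _ ≤ m ^ n * u ^ 2 := by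
        rw [sq_abs]
        exact mul_le_mul_of_nonneg_right (pow_le_pow_left₀ (abs_nonneg u) hu n) (sq_nonneg u)
    _ = u ^ 2 * m ^ n := by ring
  calc u ^ (n + 2) ≤ u ^ 2 * m ^ n := key
    _ = u ^ 2 / m ^ 2 * m ^ (n + 2) := by field_simp; ring
    _ ≤ u ^ 2 / m ^ 2 * (m ^ (n + 2) / (n + 2).factorial) * (n + 2).factorial := by
        rw [mul_assoc, div_mul_cancel₀]; positivity

theorem mgf_bound_bounded_centered_vector
    {Ω : Type*} [MeasureSpace Ω] [IsProbabilityMeasure (volume : Measure Ω)]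
    (k : ℕ) (X : Ω → EuclideanSpace ℝ (Fin k)) (hX : Measurable X)
    (D γ : ℝ) (hD : 0 < D) (hγ : 0 < γ)
    (hbound : ∀ᵐ ω, ‖X ω‖ ≤ D)
    (hmean : ∫ ω, X ω = 0) :
    ∀ s : EuclideanSpace ℝ (Fin k), ‖s‖ ≤ 1 / (γ * D) →
      ∫ ω, Real.exp (2 * (inner ℝ s (X ω) : ℝ))
        ≤ 1 + ‖s‖ ^ 2 * D ^ 2 * γ ^ 2 * (Real.exp (2 / γ) - 1 - 2 / γ) := by
  intro s hs
  set K : ℝ := γ ^ 2 * (Real.exp (2 / γ) - 1 - 2 / γ) with hKdef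
  have hKnn : 0 ≤ K := by
    have := Real.add_one_le_exp (2 / γ)
    have h2γ : 0 ≤ 2 / γ := by positivity
    nlinarith [sq_nonneg γ]
  set Y : Ω → ℝ := fun ω => (inner ℝ s (X ω) : ℝ) with hYdef
  have hYm : Measurable Y := measurable_const.inner hX
  have hsD : ‖s‖ * D ≤ 1 / γ := by
    have : 1 / (γ * D) * D = 1 / γ := by field_simp
    nlinarith [mul_le_mul_of_nonneg_right hs hD.le]
  have hYb : ∀ᵐ ω, |Y ω| ≤ ‖s‖ * D := by
    filter_upwards [hbound] with ω h
    calc |Y ω| ≤ ‖s‖ * ‖X ω‖ := abs_real_inner_le_norm s (X ω)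
      _ ≤ ‖s‖ * D := mul_le_mul_of_nonneg_left h (norm_nonneg s)
  -- pointwise bound
  have hpt : ∀ᵐ ω, Real.exp (2 * Y ω) ≤ 1 + 2 * Y ω + ‖s‖ ^ 2 * D ^ 2 * K := by
    filter_upwards [hYb] with ω h
    have hm : (0:ℝ) < 2 / γ := by positivity
    have hu : |2 * Y ω| ≤ 2 / γ := by
      rw [abs_mul, abs_two]
      calc 2 * |Y ω| ≤ 2 * (‖s‖ * D) := by linarith
        _ ≤ 2 * (1 / γ) := by linarith
        _ = 2 / γ := by ring
    have := exp_pointwise_bound (2 * Y ω) (2 / γ) hm hu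
    have heq : (2 * Y ω) ^ 2 / (2 / γ) ^ 2 * (Real.exp (2 / γ) - 1 - 2 / γ)
        = Y ω ^ 2 * K := by
      rw [hKdef]; field_simp
    rw [heq] at this
    have hY2 : Y ω ^ 2 ≤ ‖s‖ ^ 2 * D ^ 2 := by
      have : Y ω ^ 2 = |Y ω| ^ 2 := (sq_abs _).symm
      nlinarith [abs_nonneg (Y ω), norm_nonneg s]
    nlinarith
  -- integrability
  have hXint : Integrable X := by
    refine (integrable_const D).mono' hX.aestronglyMeasurable ?_
    filter_upwards [hbound] with ω h using h
  have hYint : Integrable Y := by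
    refine (integrable_const (‖s‖ * D)).mono' hYm.aestronglyMeasurable ?_
    filter_upwards [hYb] with ω h using by simpa [Real.norm_eq_abs] using h
  have hEint : Integrable (fun ω => Real.exp (2 * Y ω)) := by
    refine (integrable_const (Real.exp (2 / γ))).mono'
      ((hYm.const_mul 2).exp).aestronglyMeasurable ?_
    filter_upwards [hYb] with ω h
    rw [Real.norm_eq_abs, abs_of_pos (Real.exp_pos _)]
    apply Real.exp_le_exp.2
    have h2 := (abs_le.1 h).2
    have h3 : 2 * Y ω ≤ 2 * (1 / γ) := by linarith
    have h4 : 2 * (1 / γ) = 2 / γ := by ring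
    linarith
  have h1int : Integrable (fun ω => 1 + 2 * Y ω) := by
    exact (integrable_const 1).add (hYint.const_mul 2)
  have hGint : Integrable (fun ω => 1 + 2 * Y ω + ‖s‖ ^ 2 * D ^ 2 * K) := by
    exact h1int.add (integrable_const _)
  have hEY : ∫ ω, Y ω = 0 := by
    rw [hYdef]
    simp only
    rw [integral_inner hXint s, hmean, inner_zero_right]
  calc ∫ ω, Real.exp (2 * Y ω) ≤ ∫ ω, (1 + 2 * Y ω + ‖s‖ ^ 2 * D ^ 2 * K) :=
        integral_mono_ae hEint hGint hpt
    _ = 1 + 2 * (∫ ω, Y ω) + ‖s‖ ^ 2 * D ^ 2 * K := by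
        rw [integral_add h1int (integrable_const _),
          integral_add (integrable_const 1) (hYint.const_mul 2),
          integral_const, integral_const_mul]
        simp
    _ = 1 + ‖s‖ ^ 2 * D ^ 2 * γ ^ 2 * (Real.exp (2 / γ) - 1 - 2 / γ) := by
        rw [hEY, hKdef]
        ring
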